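/- arXiv:2007.12123 — 2 statements merged into one kernel-verified Lean document; each statement's English description precedes it below -/
import Mathlib

section
/- Let G be a finite directed graph with F ⊆ V, and let F* be the largest self-reachable subset of F. If F* is nonempty and v is a vertex from which some vertex of F* is reachable, then there exists an infinite walk starting at v that visits F* (hence F) infinitely often. -/
/-- A subset A of F is self-reachable if every pair of its vertices are mutually reachable. -/
def SelfReach {V : Type*} (E : V → V → Prop) (F A : Set V) : Prop :=
  A ⊆ F ∧ ∀ u ∈ A, ∀ v ∈ A, Relation.ReflTransGen E u v ∧ Relation.ReflTransGen E v u

/-- The largest self-reachable subset F* of F. -/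
def FstarSet {V : Type*} (E : V → V → Prop) (F : Set V) : Set V :=
  ⋃₀ {A | SelfReach E F A}

/-- If F* is nonempty, every vertex of F* lies on a directed cycle, and some vertex of
F* is reachable from v, then there is an infinite walk from v visiting F* (hence F)
infinitely often. -/
theorem exists_accepting_walk {V : Type*} [Finite V]
    (E : V → V → Prop) (F : Set V)
    (hcyc : ∀ u ∈ FstarSet E F, ∃ u', E u u' ∧ Relation.ReflTransGen E u' u)
    (v : V) (hreach : ∃ f ∈ FstarSet E F, Relation.ReflTransGen E v f) :
    ∃ walk : ℕ → V, walk 0 = v ∧ (∀ i, E (walk i) (walk (i + 1))) ∧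
      {i | walk i ∈ FstarSet E F}.Infinite ∧ {i | walk i ∈ F}.Infinite := by
  obtain ⟨f, hf, hvf⟩ := hreach
  obtain ⟨u', hfu', hu'f⟩ := hcyc f hf
  obtain ⟨l₀, hl₀, hl₀last⟩ := List.exists_isChain_cons_of_relationReflTransGen hvf
  obtain ⟨l₂, hl₂, hl₂last⟩ := List.exists_isChain_cons_of_relationReflTransGen hu'f
  set p : List V := v :: l₀ with hp
  set c : List V := u' :: l₂ with hc
  have hP : 0 < p.length := Nat.succ_pos _
  have hC : 0 < c.length := Nat.succ_pos _
  have hpchain : List.Chain' E p := hl₀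
  have hcchain : List.Chain' E c := hl₂
  have hplast : p.get ⟨p.length - 1, by omega⟩ = f := by
    rw [List.get_eq_getElem, ← List.getLast_eq_getElem]; exact hl₀last
  have hclast : c.get ⟨c.length - 1, by omega⟩ = f := by
    rw [List.get_eq_getElem, ← List.getLast_eq_getElem]; exact hl₂last
  -- the cyclic part
  set cg : ℕ → V := fun m => c.get ⟨m % c.length, Nat.mod_lt _ hC⟩ with hcg
  set walk : ℕ → V := fun n =>
    if h : n < p.length then p.get ⟨n, h⟩ else cg (n - p.length) with hwalk
  have wp : ∀ n (h : n < p.length), walk n = p.get ⟨n, h⟩ := fun n h => dif_pos h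
  have wc : ∀ n, p.length ≤ n → walk n = cg (n - p.length) :=
    fun n h => dif_neg (by omega)
  have cg0 : cg 0 = u' := by simp [hcg, Nat.mod_eq_of_lt hC, hc]
  have cglast : ∀ m, m % c.length = c.length - 1 → cg m = f := by
    intro m hm
    have : cg m = c.get ⟨c.length - 1, by omega⟩ := by simp only [hcg, hm]
    rw [this, hclast]
  have cgstep : ∀ m, E (cg m) (cg (m + 1)) := by
    intro m
    have hmm : (m + 1) % c.length = (m % c.length + 1) % c.length :=
      (Nat.mod_add_mod m c.length 1).symm
    by_cases h : m % c.length + 1 < c.length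
    · have h2 : (m + 1) % c.length = m % c.length + 1 := by
        rw [hmm, Nat.mod_eq_of_lt h]
      have : cg (m + 1) = c.get ⟨m % c.length + 1, h⟩ := by simp only [hcg, h2]
      rw [this]
      exact List.isChain_iff_getElem.mp hcchain (m % c.length) (by omega)
    · have hm : m % c.length = c.length - 1 := by
        have := Nat.mod_lt m hC; omega
      have h2 : (m + 1) % c.length = 0 := by
        rw [hmm, hm, Nat.sub_add_cancel hC, Nat.mod_self]
      have : cg (m + 1) = cg 0 := by simp only [hcg, h2, Nat.zero_mod]
      rw [this, cg0, cglast m hm]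
      exact hfu'
  refine ⟨walk, ?_, ?_, ?_, ?_⟩
  · rw [wp 0 hP]; rfl
  · intro n
    by_cases h1 : n + 1 < p.length
    · rw [wp n (by omega), wp (n + 1) h1]
      exact List.isChain_iff_getElem.mp hpchain n (by omega)
    · by_cases h0 : n < p.length
      · -- boundary: n = p.length - 1
        have hn : n = p.length - 1 := by omega
        have hwn : walk n = f := by
          rw [wp n h0]
          have : p.get ⟨n, h0⟩ = p.get ⟨p.length - 1, by omega⟩ := by
            simp only [hn]
          rw [this, hplast]
        have hwn1 : walk (n + 1) = u' := by
          rw [wc (n + 1) (by omega)]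
          have : n + 1 - p.length = 0 := by omega
          rw [this, cg0]
        rw [hwn, hwn1]; exact hfu'
      · rw [wc n (by omega), wc (n + 1) (by omega)]
        have : n + 1 - p.length = (n - p.length) + 1 := by omega
        rw [this]
        exact cgstep _
  · -- walk hits f at indices p.length - 1 + k * c.length
    have key : ∀ k : ℕ, walk (p.length - 1 + k * c.length) = f := by
      intro k
      cases k with
      | zero =>
        simp only [Nat.zero_mul, Nat.add_zero]
        rw [wp _ (by omega)]
        have : p.get ⟨p.length - 1, by omega⟩ = f := hplast
        convert this using 2
      | succ k =>
        have hge : p.length ≤ p.length - 1 + (k + 1) * c.length := by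
          have : 1 ≤ (k + 1) * c.length := Nat.one_le_iff_ne_zero.mpr (by positivity)
          omega
        rw [wc _ hge]
        apply cglast
        have : p.length - 1 + (k + 1) * c.length - p.length
            = k * c.length + (c.length - 1) := by
          have h1 : (k + 1) * c.length = k * c.length + c.length := by ring
          omega
        rw [this, Nat.mul_comm, Nat.mul_add_mod, Nat.mod_eq_of_lt (by omega)]
    apply Set.infinite_of_injective_forall_mem
      (f := fun k : ℕ => p.length - 1 + k * c.length)
    · intro a b hab
      simp only at hab
      have : a * c.length = b * c.length := by omega
      exact Nat.eq_of_mul_eq_mul_right hC this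
    · intro k
      simp only [Set.mem_setOf_eq, key k]
      exact hf
  · have hFsub : FstarSet E F ⊆ F := by
      rintro x ⟨A, hA, hx⟩
      exact hA.1 hx
    · -- reuse the same argument
      have key : ∀ k : ℕ, walk (p.length - 1 + k * c.length) = f := by
        intro k
        cases k with
        | zero =>
          simp only [Nat.zero_mul, Nat.add_zero]
          rw [wp _ (by omega)]
          exact hplast
        | succ k =>
          have hge : p.length ≤ p.length - 1 + (k + 1) * c.length := by
            have : 1 ≤ (k + 1) * c.length := Nat.one_le_iff_ne_zero.mpr (by positivity)
            omega
          rw [wc _ hge]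
          apply cglast
          have : p.length - 1 + (k + 1) * c.length - p.length
              = k * c.length + (c.length - 1) := by
            have h1 : (k + 1) * c.length = k * c.length + c.length := by ring
            omega
          rw [this, Nat.mul_comm, Nat.mul_add_mod, Nat.mod_eq_of_lt (by omega)]
      apply Set.infinite_of_injective_forall_mem
        (f := fun k : ℕ => p.length - 1 + k * c.length)
      · intro a b hab
        simp only at hab
        have : a * c.length = b * c.length := by omega
        exact Nat.eq_of_mul_eq_mul_right hC this
      · intro k
        simp only [Set.mem_setOf_eq, key k]
        exact hFsub hf
end

section
/- Recursive feasibility of the RHC scheme: in a finite directed graph with strictly positive weights and energy J (distance to nonempty self-reachable F*), suppose at step k−1 the chosen horizon-N path s₁…s_N from the current vertex satisfies J(s_i) > 0 for all i and J(s_N) < ∞. Then there exists a horizon-N path t₁…t_N starting from s₁ (i.e., each consecutive pair an edge, (s₁,t₁) an edge) with J(t_N) < J(s_N); namely t_i = s_{i+1} for i < N and t_N any successor of s_N with strictly smaller energy. -/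
open scoped ENNReal
open Classical

/-- Total weight of a walk given as a list of vertices. -/
noncomputable def walkCost {V : Type*} (w : V → V → ℝ≥0∞) : List V → ℝ≥0∞
  | [] => 0
  | [_] => 0
  | a :: b :: t => w a b + walkCost w (b :: t)

/-- Energy: J(v) = 0 if v ∈ F*, else the minimum total weight over directed paths
from v into F* (∞ if no such path exists). -/
noncomputable def energy {V : Type*} (E : V → V → Prop) (w : V → V → ℝ≥0∞)
    (Fstar : Set V) (v : V) : ℝ≥0∞ :=
  if v ∈ Fstar then 0
  else sInf {c | ∃ p : List V, p ≠ [] ∧ List.Chain' E (v :: p) ∧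
        (v :: p).getLast (by simp) ∈ Fstar ∧ c = walkCost w (v :: p)}

lemma energy_le_tail {V : Type*} (E : V → V → Prop) (w : V → V → ℝ≥0∞)
    (Fstar : Set V) (v' : V) (q : List V) (hch : List.Chain' E (v' :: q))
    (hlast : (v' :: q).getLast (by simp) ∈ Fstar) :
    energy E w Fstar v' ≤ walkCost w (v' :: q) := by
  unfold energy
  split_ifs with h
  · exact zero_le
  · rcases q with _ | ⟨b, q⟩
    · simp at hlast; exact absurd hlast h
    · exact sInf_le ⟨b :: q, by simp, hch, hlast, rfl⟩

lemma bellman {V : Type*} [Finite V] (E : V → V → Prop) (w : V → V → ℝ≥0∞)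
    (hw : ∀ a b, E a b → 0 < w a b) (hwfin : ∀ a b, E a b → w a b < ⊤)
    (Fstar : Set V) (v : V)
    (hpos : 0 < energy E w Fstar v) (hfin : energy E w Fstar v < ⊤) :
    ∃ v', E v v' ∧ energy E w Fstar v' < energy E w Fstar v := by
  classical
  haveI : Fintype V := Fintype.ofFinite V
  have hvF : v ∉ Fstar := by
    intro h; rw [energy, if_pos h] at hpos; exact lt_irrefl _ hpos
  have hEv : energy E w Fstar v =
      sInf {c | ∃ p : List V, p ≠ [] ∧ List.Chain' E (v :: p) ∧
        (v :: p).getLast (by simp) ∈ Fstar ∧ c = walkCost w (v :: p)} := by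
    rw [energy, if_neg hvF]
  -- edge set and minimal weight
  set Edges : Finset (V × V) := Finset.univ.filter (fun p => E p.1 p.2) with hE
  -- from hfin, get at least one path, hence one edge
  have hne : Edges.Nonempty := by
    rw [hEv] at hfin
    obtain ⟨c, hc, -⟩ := sInf_lt_iff.mp hfin
    obtain ⟨p, hp, hch, -, -⟩ := hc
    rcases p with _ | ⟨b, q⟩
    · exact absurd rfl hp
    · exact ⟨(v, b), by simp [hE, hch.rel_head]⟩
  set δ : ℝ≥0∞ := Edges.inf' hne (fun p => w p.1 p.2) with hδ
  have hδ0 : 0 < δ := by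
    rw [hδ, Finset.lt_inf'_iff]
    intro p hp
    exact hw p.1 p.2 (by simpa [hE] using hp)
  have hδtop : δ ≠ ⊤ := by
    obtain ⟨p, hp⟩ := hne
    exact ((Finset.inf'_le _ hp).trans_lt (hwfin p.1 p.2 (by simpa [hE] using hp))).ne
  have hδle : ∀ a b, E a b → δ ≤ w a b := by
    intro a b h
    exact Finset.inf'_le (fun p => w p.1 p.2) (show (a, b) ∈ Edges by simp [hE, h])
  -- near-optimal path
  have hlt : energy E w Fstar v < energy E w Fstar v + δ :=
    ENNReal.lt_add_right hfin.ne hδ0.ne'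
  rw [hEv] at hlt
  obtain ⟨c, hc, hclt⟩ := sInf_lt_iff.mp hlt
  obtain ⟨p, hp, hch, hlast, hceq⟩ := hc
  rcases p with _ | ⟨v', q⟩
  · exact absurd rfl hp
  have hEvv' : E v v' := hch.rel_head
  have hcost : c = w v v' + walkCost w (v' :: q) := by
    simpa [walkCost] using hceq
  have htail : energy E w Fstar v' ≤ walkCost w (v' :: q) :=
    energy_le_tail E w Fstar v' q hch.tail
      (by simpa [List.getLast_cons (List.cons_ne_nil v' q)] using hlast)
  refine ⟨v', hEvv', ?_⟩
  have key : energy E w Fstar v' + δ < energy E w Fstar v + δ := by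
    calc energy E w Fstar v' + δ ≤ walkCost w (v' :: q) + w v v' :=
          add_le_add htail (hδle v v' hEvv')
      _ = c := by rw [hcost, add_comm]
      _ < energy E w Fstar v + δ := by rw [hEv]; exact hclt
  exact (ENNReal.add_lt_add_iff_right hδtop).mp key

/-- Recursive feasibility of the RHC scheme: if the previously chosen horizon-N path
s₁…s_N satisfies J(s_i) > 0 for all i and J(s_N) < ∞, then there is a horizon-N path
t₁…t_N starting from s₁ (shifting s and appending a Bellman successor of s_N) with
J(t_N) < J(s_N). -/
theorem rhc_recursive_feasibility {V : Type*} [Finite V]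
    (E : V → V → Prop) (w : V → V → ℝ≥0∞)
    (hw : ∀ a b, E a b → 0 < w a b) (hwfin : ∀ a b, E a b → w a b < ⊤)
    (Fstar : Set V) (hF : Fstar.Nonempty)
    (N : ℕ) (hN : 1 ≤ N) (s : ℕ → V)
    (hpath : ∀ i, 1 ≤ i → i < N → E (s i) (s (i + 1)))
    (hpos : ∀ i, 1 ≤ i → i ≤ N → 0 < energy E w Fstar (s i))
    (hfin : energy E w Fstar (s N) < ⊤) :
    ∃ t : ℕ → V,
      (∀ i, 1 ≤ i → i < N → t i = s (i + 1)) ∧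
      E (s 1) (t 1) ∧
      (∀ i, 1 ≤ i → i < N → E (t i) (t (i + 1))) ∧
      E (s N) (t N) ∧
      energy E w Fstar (t N) < energy E w Fstar (s N) := by
  obtain ⟨v', hEv', hlt⟩ := bellman E w hw hwfin Fstar (s N) (hpos N hN le_rfl) hfin
  refine ⟨fun i => if i < N then s (i + 1) else v', ?_, ?_, ?_, ?_, ?_⟩
  · intro i h1 h2; simp [h2]
  · by_cases h : 1 < N
    · simpa [h] using hpath 1 le_rfl h
    · have hN1 : N = 1 := le_antisymm (not_lt.mp h) hN
      simp only [hN1, lt_irrefl, if_neg (lt_irrefl 1)]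
      simpa [hN1] using hEv'
  · intro i h1 h2
    by_cases h : i + 1 < N
    · simpa [h2, h] using hpath (i + 1) (by omega) h
    · have : i + 1 = N := by omega
      simp only [if_pos h2, if_neg h]
      rw [this]; exact hEv'
  · simpa using hEv'
  · simpa using hlt
end
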